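/- arXiv:1411.0183 — 3 statements merged into one kernel-verified Lean document; each statement's English description precedes it below -/
import Mathlib

section
/- Let $(Z_n)_{n \geq 1}$ be a sequence of real numbers (log-likelihood ratios). Define the CuSum recursion $C_0 = 0$, $C_{n+1} = \max\{0, C_n + Z_{n+1}\}$, and the DE-CuSum recursion with parameters $\mu > 0$, $h \geq 0$: $W_0 = 0$, and $W_{n+1} = \min\{W_n + \mu, 0\}$ if $W_n < 0$, while $W_{n+1} = \max\{W_n + Z_{n+1}, -h\}$ if $W_n \geq 0$. Then $C_n \geq W_n$ for all $n \geq 0$. -/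
/-- Pathwise domination of the DE-CuSum statistic by the CuSum statistic:
for any common input sequence `Z`, with `C₀ = W₀ = 0`,
`C_{n+1} = max {0, C_n + Z_{n+1}}` and the DE-CuSum recursion with parameters
`μ > 0`, `h ≥ 0`, we have `C_n ≥ W_n` for all `n`. -/
theorem stmt_3 (Z : ℕ → ℝ) (μ h : ℝ) (hμ : 0 < μ) (hh : 0 ≤ h)
    (C W : ℕ → ℝ) (hC0 : C 0 = 0)
    (hC : ∀ n, C (n + 1) = max 0 (C n + Z (n + 1)))
    (hW0 : W 0 = 0)
    (hW : ∀ n, W (n + 1) =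
      if W n < 0 then min (W n + μ) 0 else max (W n + Z (n + 1)) (-h)) :
    ∀ n, W n ≤ C n := by
  have hCpos : ∀ n, 0 ≤ C n := by
    intro n
    cases n with
    | zero => simp [hC0]
    | succ k => rw [hC k]; exact le_max_left _ _
  intro n
  induction n with
  | zero => simp [hC0, hW0]
  | succ k ih =>
    rw [hW k, hC k]
    split_ifs with hk
    · exact le_trans (min_le_right _ _) (le_max_left _ _)
    · exact max_le (le_max_of_le_right (by linarith)) (le_max_of_le_left (by linarith))
end

section
/- Let $X_1, X_2, \dots$ be i.i.d. with mean $-D < 0$, let $\tau_-$ be the first time the partial sum $\sum_{k=1}^n X_k$ is negative, and let $S_{\tau_-}$ be the value of the partial sum at that time. Define the skip duration $V = \lceil |S_{\tau_-}| / \mu \rceil$ for $\mu > 0$. Then the pre-change duty cycle $\mathrm{PDC} = \frac{\mathbb{E}[\tau_-]}{\mathbb{E}[\tau_-] + \mathbb{E}[V]}$ satisfies $\mathrm{PDC} \leq \frac{\mu}{\mu + D}$. -/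
open MeasureTheory
open scoped ENNReal

/-- PDC bound for the DE-CuSum algorithm with `h = ∞`: for i.i.d. increments with mean
`-D < 0`, ladder epoch `τ₋` and skip duration `V = ⌈|S_{τ₋}|/μ⌉`, the pre-change duty
cycle `PDC = 𝔼[τ₋] / (𝔼[τ₋] + 𝔼[V])` satisfies `PDC ≤ μ / (μ + D)`. -/
theorem stmt_9 {Ω : Type*} [MeasurableSpace Ω] (P : Measure Ω) [IsProbabilityMeasure P]
    (X : ℕ → Ω → ℝ) (hmeas : ∀ k, Measurable (X k))
    (hindep : ProbabilityTheory.iIndepFun X P)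
    (hident : ∀ k, ProbabilityTheory.IdentDistrib (X k) (X 0) P P)
    (D : ℝ) (hD : 0 < D) (hmean : ∫ ω, X 0 ω ∂P = -D)
    (μ : ℝ) (hμ : 0 < μ)
    (τ : Ω → ℕ)
    (hτ : ∀ ω, τ ω = sInf {n | 1 ≤ n ∧ ∑ k ∈ Finset.range n, X k ω < 0})
    (hτint : Integrable (fun ω => (τ ω : ℝ)) P)
    (hSint : Integrable (fun ω => |∑ k ∈ Finset.range (τ ω), X k ω|) P)
    (hτpos : 0 < ∫ ω, (τ ω : ℝ) ∂P)
    (V : Ω → ℕ)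
    (hV : ∀ ω, V ω = ⌈|∑ k ∈ Finset.range (τ ω), X k ω| / μ⌉₊)
    (hVint : Integrable (fun ω => (V ω : ℝ)) P) :
    (∫ ω, (τ ω : ℝ) ∂P) / ((∫ ω, (τ ω : ℝ) ∂P) + ∫ ω, (V ω : ℝ) ∂P) ≤ μ / (μ + D) := by
  classical
  set S : ℕ → Ω → ℝ := fun n ω => ∑ k ∈ Finset.range n, X k ω with hSdef
  have hSmeas : ∀ n, Measurable (S n) := fun n =>
    Finset.measurable_sum _ (fun k _ => hmeas k)
  -- characterization of k < τ ω
  have hlt : ∀ k ω, k < τ ω ↔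
      ((∃ n, 1 ≤ n ∧ S n ω < 0) ∧ ∀ j, 1 ≤ j → j ≤ k → 0 ≤ S j ω) := by
    intro k ω
    rw [hτ ω]
    constructor
    · intro h
      rcases Set.eq_empty_or_nonempty {n | 1 ≤ n ∧ S n ω < 0} with he | hne
      · rw [he, Nat.sInf_empty] at h; omega
      · refine ⟨hne, fun j hj1 hjk => ?_⟩
        have : j ∉ {n | 1 ≤ n ∧ S n ω < 0} :=
          Nat.notMem_of_lt_sInf (lt_of_le_of_lt hjk h)
        simp only [Set.mem_setOf_eq, not_and, not_lt] at this
        exact this hj1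
    · rintro ⟨hne, hall⟩
      have hmem := Nat.sInf_mem hne
      by_contra hc
      push_neg at hc
      exact absurd (hall _ hmem.1 hc) (not_le.mpr hmem.2)
  -- measurability of {k < τ}
  have hmeasset : ∀ k, MeasurableSet {ω | k < τ ω} := by
    intro k
    have : {ω | k < τ ω} =
        (⋃ n, ⋃ (_ : 1 ≤ n), {ω | S n ω < 0}) ∩
        (⋂ j, ⋂ (_ : 1 ≤ j), ⋂ (_ : j ≤ k), {ω | 0 ≤ S j ω}) := by
      ext ω
      simp only [Set.mem_setOf_eq, Set.mem_inter_iff, Set.mem_iUnion, Set.mem_iInter, hlt k ω]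
      tauto
    rw [this]
    exact ((MeasurableSet.iUnion fun n => MeasurableSet.iUnion fun _ =>
        measurableSet_lt (hSmeas n) measurable_const)).inter
      (MeasurableSet.iInter fun j => MeasurableSet.iInter fun _ => MeasurableSet.iInter fun _ =>
        measurableSet_le measurable_const (hSmeas j))
  have hτmeas : Measurable τ := by
    apply measurable_to_countable'
    intro n
    have : τ ⁻¹' {n} = (⋂ k ∈ Finset.range n, {ω | k < τ ω}) ∩ {ω | n < τ ω}ᶜ := by
      ext ω
      simp only [Set.mem_preimage, Set.mem_singleton_iff, Set.mem_inter_iff, Set.mem_iInter,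
        Set.mem_compl_iff, Set.mem_setOf_eq, Finset.mem_range, not_lt]
      constructor
      · rintro rfl; exact ⟨fun k hk => hk, le_refl _⟩
      · rintro ⟨h1, h2⟩
        rcases Nat.eq_zero_or_pos n with rfl | hn
        · omega
        · have := h1 (n - 1) (by omega); omega
    rw [this]
    exact ((Finset.measurableSet_biInter _ (fun k _ => hmeasset k))).inter
      (hmeasset n).compl
  -- Sτ
  set Sτ : Ω → ℝ := fun ω => S (τ ω) ω with hSτdef
  have hSτmeas : Measurable Sτ := by
    have h1 : Measurable (fun p : Ω × ℕ => S p.2 p.1) :=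
      measurable_from_prod_countable_left (fun n => hSmeas n)
    exact h1.comp (measurable_id.prodMk hτmeas)
  have hSτint : Integrable Sτ P := by
    rw [← integrable_norm_iff hSτmeas.aestronglyMeasurable]
    simpa [Real.norm_eq_abs] using hSint
  -- integrability of X's
  have hX0int : Integrable (X 0) P := by
    by_contra h
    rw [integral_undef h] at hmean; linarith
  have hXint : ∀ k, Integrable (X k) P := fun k => (hident k).integrable_iff.mpr hX0int
  -- SLLN: a.s. the stopping set is nonempty
  have hpair : Pairwise (Function.onFun (ProbabilityTheory.IndepFun · · P) X) :=
    fun i j hij => hindep.indepFun hij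
  have hslln := ProbabilityTheory.strong_law_ae X hX0int hpair hident
  have hae : ∀ᵐ ω ∂P, ∃ n, 1 ≤ n ∧ S n ω < 0 := by
    filter_upwards [hslln] with ω hω
    rw [hmean] at hω
    have hev : ∀ᶠ n : ℕ in Filter.atTop, (n : ℝ)⁻¹ • S n ω < 0 :=
      hω.eventually_lt_const (by linarith)
    obtain ⟨n, hn2, hn1⟩ := (hev.and (Filter.eventually_ge_atTop 1)).exists
    refine ⟨n, hn1, ?_⟩
    by_contra hc
    push_neg at hc
    have hn0 : (0 : ℝ) < n := by exact_mod_cast hn1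
    have : (0 : ℝ) ≤ (n : ℝ)⁻¹ • S n ω := by
      rw [smul_eq_mul]
      exact mul_nonneg (inv_nonneg.mpr hn0.le) hc
    linarith
  -- past-measurable version of {k < τ} and independence
  have key : ∀ k, ∫ ω, Set.indicator {ω | k < τ ω} (X k) ω ∂P =
      (-D) * (P {ω | k < τ ω}).toReal := by
    intro k
    set B : Set Ω := {ω | ∀ j, 1 ≤ j → j ≤ k → 0 ≤ S j ω} with hBdef
    have hBmeas : MeasurableSet B := by
      have : B = ⋂ j, ⋂ (_ : 1 ≤ j), ⋂ (_ : j ≤ k), {ω | 0 ≤ S j ω} := by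
        ext ω; simp [hBdef]
      rw [this]
      exact MeasurableSet.iInter fun j => MeasurableSet.iInter fun _ =>
        MeasurableSet.iInter fun _ => measurableSet_le measurable_const (hSmeas j)
    have haeset : {ω | k < τ ω} =ᵐ[P] B := by
      rw [Filter.eventuallyEq_set]
      filter_upwards [hae] with ω hω
      rw [hlt k ω]
      exact ⟨fun h => h.2, fun h => ⟨hω, h⟩⟩
    -- independence of X k and the indicator of B
    have hind : ProbabilityTheory.IndepFun (X k) (Set.indicator B (fun _ => (1:ℝ))) P := by
      have hdisj : Disjoint ({k} : Finset ℕ) (Finset.range k) := by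
        simp [Finset.disjoint_left]
      have hbase := hindep.indepFun_finset {k} (Finset.range k) hdisj hmeas
      set C : (({j // j ∈ Finset.range k}) → ℝ) → ℝ :=
        Set.indicator {v | ∀ j, 1 ≤ j → j ≤ k →
          0 ≤ ∑ i : {j // j ∈ Finset.range k}, if (i : ℕ) < j then v i else 0}
          (fun _ => (1:ℝ)) with hCdef
      have hCsetmeas : MeasurableSet {v : ({j // j ∈ Finset.range k}) → ℝ | ∀ j, 1 ≤ j → j ≤ k →
          0 ≤ ∑ i : {j // j ∈ Finset.range k}, if (i : ℕ) < j then v i else 0} := by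
        have : {v : ({j // j ∈ Finset.range k}) → ℝ | ∀ j, 1 ≤ j → j ≤ k →
            0 ≤ ∑ i : {j // j ∈ Finset.range k}, if (i : ℕ) < j then v i else 0}
            = ⋂ j, ⋂ (_ : 1 ≤ j), ⋂ (_ : j ≤ k),
              {v | 0 ≤ ∑ i : {j // j ∈ Finset.range k}, if (i : ℕ) < j then v i else 0} := by
          ext v; simp
        rw [this]
        refine MeasurableSet.iInter fun j => MeasurableSet.iInter fun _ =>
          MeasurableSet.iInter fun _ => measurableSet_le measurable_const ?_
        exact Finset.measurable_sum _ (fun i _ => by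
          by_cases h : (i : ℕ) < j
          · simpa [h] using measurable_pi_apply i
          · simpa [h] using measurable_const)
      have hCmeas : Measurable C := by
        exact (measurable_const.indicator hCsetmeas)
      have hcomp := hbase.comp
        (φ := fun v : (({j // j ∈ ({k} : Finset ℕ)}) → ℝ) => v ⟨k, Finset.mem_singleton_self k⟩)
        (ψ := C) (show Measurable (fun v : (({j // j ∈ ({k} : Finset ℕ)}) → ℝ) =>
          v ⟨k, Finset.mem_singleton_self k⟩) from measurable_pi_apply _) hCmeas
      have heq2 : (fun ω => C (fun i : {j // j ∈ Finset.range k} => X i ω))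
          = Set.indicator B (fun _ => (1:ℝ)) := by
        funext ω
        have hsum : ∀ j, j ≤ k →
            (∑ i : {j // j ∈ Finset.range k}, if (i : ℕ) < j then X i ω else 0) = S j ω := by
          intro j hj
          have h1 := Finset.sum_subtype (p := fun i => i ∈ Finset.range k)
            (F := Finset.Subtype.fintype _)
            (Finset.range k) (fun i => Iff.rfl) (fun i => if i < j then X i ω else 0)
          rw [← h1, ← Finset.sum_filter]
          have hfil : (Finset.range k).filter (fun i => i < j) = Finset.range j := by
            ext i; simp only [Finset.mem_filter, Finset.mem_range]; omega
          rw [hfil]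
        have hmemiff : (fun i : {j // j ∈ Finset.range k} => X i ω) ∈
            {v : ({j // j ∈ Finset.range k}) → ℝ | ∀ j, 1 ≤ j → j ≤ k →
              0 ≤ ∑ i : {j // j ∈ Finset.range k}, if (i : ℕ) < j then v i else 0}
            ↔ ω ∈ B := by
          constructor
          · intro h j hj1 hjk
            have := h j hj1 hjk
            rwa [hsum j hjk] at this
          · intro h j hj1 hjk
            rw [hsum j hjk]
            exact h j hj1 hjk
        simp only [hCdef, Set.indicator_apply]
        by_cases h : ω ∈ B
        · rw [if_pos (hmemiff.mpr h), if_pos h]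
        · rw [if_neg (fun hc => h (hmemiff.mp hc)), if_neg h]
      have heq2' : (C ∘ fun a (i : {j // j ∈ Finset.range k}) => X (↑i) a)
          = Set.indicator B (fun _ => (1:ℝ)) := heq2
      rw [← heq2']
      exact hcomp
    have hBint : Integrable (Set.indicator B (fun _ => (1:ℝ))) P :=
      (integrable_const (1:ℝ)).indicator hBmeas
    have hmul := ProbabilityTheory.IndepFun.integral_mul_eq_mul_integral hind
      (hXint k).aestronglyMeasurable hBint.aestronglyMeasurable
    have hXkmean : ∫ ω, X k ω ∂P = -D := by rw [(hident k).integral_eq, hmean]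
    have hBone : ∫ ω, Set.indicator B (fun _ => (1:ℝ)) ω ∂P = (P B).toReal := by
      exact integral_indicator_one hBmeas
    -- rewrite the goal using the a.e. equal set B
    have hPeq : P {ω | k < τ ω} = P B := measure_congr haeset
    have haefun : (fun ω => Set.indicator {ω | k < τ ω} (X k) ω)
        =ᵐ[P] (fun ω => X k ω * Set.indicator B (fun _ => (1:ℝ)) ω) := by
      have haeset' := haeset
      rw [Filter.eventuallyEq_set] at haeset'
      filter_upwards [haeset'] with ω hω
      by_cases h : ω ∈ B
      · rw [Set.indicator_of_mem (show ω ∈ {ω | k < τ ω} from hω.mpr h) (X k),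
          Set.indicator_of_mem h, mul_one]
      · rw [Set.indicator_of_notMem (show ω ∉ {ω | k < τ ω} from fun hc => h (hω.mp hc)) (X k),
          Set.indicator_of_notMem h, mul_zero]
    rw [integral_congr_ae haefun, hPeq]
    calc ∫ ω, X k ω * Set.indicator B (fun _ => (1:ℝ)) ω ∂P
        = ∫ ω, (X k * Set.indicator B (fun _ => (1:ℝ))) ω ∂P := by rfl
      _ = (∫ ω, X k ω ∂P) * ∫ ω, Set.indicator B (fun _ => (1:ℝ)) ω ∂P := hmul
      _ = (-D) * (P B).toReal := by rw [hXkmean, hBone]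
  -- p k and step functions
  set p : ℕ → ℝ := fun k => (P {ω | k < τ ω}).toReal with hpdef
  -- sum of indicators of {k < τ} over range n equals min (τ ω) n, as reals
  have hminsum : ∀ n ω, (∑ k ∈ Finset.range n,
      Set.indicator {ω | k < τ ω} (fun _ => (1:ℝ)) ω) = ((min (τ ω) n : ℕ) : ℝ) := by
    intro n ω
    have hfil : (Finset.range n).filter (fun k => k < τ ω) = Finset.range (min (τ ω) n) := by
      ext i; simp only [Finset.mem_filter, Finset.mem_range]; omega
    calc (∑ k ∈ Finset.range n, Set.indicator {ω | k < τ ω} (fun _ => (1:ℝ)) ω)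
        = ∑ k ∈ Finset.range n, if k < τ ω then (1:ℝ) else 0 :=
          Finset.sum_congr rfl (fun k _ => by simp [Set.indicator_apply])
      _ = ∑ k ∈ (Finset.range n).filter (fun k => k < τ ω), (1:ℝ) :=
          (Finset.sum_filter _ _).symm
      _ = ((min (τ ω) n : ℕ) : ℝ) := by rw [hfil]; simp
  have hsummin : ∀ n, ∑ k ∈ Finset.range n, p k = ∫ ω, ((min (τ ω) n : ℕ) : ℝ) ∂P := by
    intro n
    have : ∀ k, p k = ∫ ω, Set.indicator {ω | k < τ ω} (fun _ => (1:ℝ)) ω ∂P := by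
      intro k
      rw [hpdef]
      exact (integral_indicator_one (hmeasset k)).symm
    simp_rw [this]
    rw [← integral_finset_sum _ (fun k _ => (integrable_const (1:ℝ)).indicator (hmeasset k))]
    exact integral_congr_ae (Filter.Eventually.of_forall (fun ω => hminsum n ω))
  -- the sum of indicator (X k) equals S (min (τ ω) n) pointwise
  have hSsum : ∀ n ω, (∑ k ∈ Finset.range n, Set.indicator {ω | k < τ ω} (X k) ω)
      = S (min (τ ω) n) ω := by
    intro n ω
    have hfil : (Finset.range n).filter (fun k => k < τ ω) = Finset.range (min (τ ω) n) := by
      ext i; simp only [Finset.mem_filter, Finset.mem_range]; omega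
    calc (∑ k ∈ Finset.range n, Set.indicator {ω | k < τ ω} (X k) ω)
        = ∑ k ∈ Finset.range n, if k < τ ω then X k ω else 0 :=
          Finset.sum_congr rfl (fun k _ => by simp [Set.indicator_apply])
      _ = ∑ k ∈ (Finset.range n).filter (fun k => k < τ ω), X k ω :=
          (Finset.sum_filter _ _).symm
      _ = S (min (τ ω) n) ω := by rw [hfil]
  -- finite-horizon inequality
  have hstep : ∀ n : ℕ, ∫ ω, Set.indicator {ω | τ ω ≤ n} Sτ ω ∂P
      ≤ (-D) * ∑ k ∈ Finset.range n, p k := by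
    intro n
    have hLint : Integrable (Set.indicator {ω | τ ω ≤ n} Sτ) P :=
      hSτint.indicator (hτmeas measurableSet_Iic)
    have hRint : Integrable (fun ω => ∑ k ∈ Finset.range n,
        Set.indicator {ω | k < τ ω} (X k) ω) P :=
      integrable_finset_sum _ (fun k _ => (hXint k).indicator (hmeasset k))
    have hpt : ∀ ω, Set.indicator {ω | τ ω ≤ n} Sτ ω
        ≤ ∑ k ∈ Finset.range n, Set.indicator {ω | k < τ ω} (X k) ω := by
      intro ω
      rw [hSsum n ω]
      by_cases h : τ ω ≤ n
      · rw [min_eq_left h, Set.indicator_of_mem (show ω ∈ {ω | τ ω ≤ n} from h)]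
      · rw [Set.indicator_of_notMem (show ω ∉ {ω | τ ω ≤ n} from h)]
        push_neg at h
        rw [min_eq_right h.le]
        rcases Nat.eq_zero_or_pos n with rfl | hn
        · simp [hSdef]
        · have := ((hlt n ω).mp h).2 n hn le_rfl
          exact this
    calc ∫ ω, Set.indicator {ω | τ ω ≤ n} Sτ ω ∂P
        ≤ ∫ ω, ∑ k ∈ Finset.range n, Set.indicator {ω | k < τ ω} (X k) ω ∂P :=
          integral_mono hLint hRint hpt
      _ = ∑ k ∈ Finset.range n, ∫ ω, Set.indicator {ω | k < τ ω} (X k) ω ∂P :=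
          integral_finset_sum _ (fun k _ => (hXint k).indicator (hmeasset k))
      _ = ∑ k ∈ Finset.range n, (-D) * p k := by
          exact Finset.sum_congr rfl (fun k _ => key k)
      _ = (-D) * ∑ k ∈ Finset.range n, p k := by rw [Finset.mul_sum]
  -- limits
  have hL1 : Filter.Tendsto (fun n => ∫ ω, Set.indicator {ω | τ ω ≤ n} Sτ ω ∂P)
      Filter.atTop (nhds (∫ ω, Sτ ω ∂P)) := by
    apply tendsto_integral_of_dominated_convergence (fun ω => |Sτ ω|)
    · intro n
      exact (hSτmeas.indicator (hτmeas measurableSet_Iic)).aestronglyMeasurable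
    · exact hSint
    · intro n
      refine Filter.Eventually.of_forall (fun ω => ?_)
      rw [Real.norm_eq_abs, Set.indicator_apply]
      split
      · exact le_rfl
      · simp [abs_nonneg]
    · refine Filter.Eventually.of_forall (fun ω => ?_)
      have : ∀ᶠ n : ℕ in Filter.atTop, Set.indicator {ω | τ ω ≤ n} Sτ ω = Sτ ω := by
        filter_upwards [Filter.eventually_ge_atTop (τ ω)] with n hn
        exact Set.indicator_of_mem (show ω ∈ {ω' | τ ω' ≤ n} from hn) Sτ
      exact Filter.Tendsto.congr' (this.mono fun n h => h.symm) tendsto_const_nhds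
  have hL2 : Filter.Tendsto (fun n => ∫ ω, ((min (τ ω) n : ℕ) : ℝ) ∂P)
      Filter.atTop (nhds (∫ ω, (τ ω : ℝ) ∂P)) := by
    apply tendsto_integral_of_dominated_convergence (fun ω => (τ ω : ℝ))
    · intro n
      exact ((measurable_from_top (f := fun m : ℕ => ((min m n : ℕ) : ℝ))).comp
        hτmeas).aestronglyMeasurable
    · exact hτint
    · intro n
      refine Filter.Eventually.of_forall (fun ω => ?_)
      rw [Real.norm_eq_abs, abs_of_nonneg (by positivity)]
      exact_mod_cast Nat.cast_le.mpr (min_le_left _ _)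
    · refine Filter.Eventually.of_forall (fun ω => ?_)
      have : ∀ᶠ n : ℕ in Filter.atTop, ((min (τ ω) n : ℕ) : ℝ) = (τ ω : ℝ) := by
        filter_upwards [Filter.eventually_ge_atTop (τ ω)] with n hn
        rw [min_eq_left hn]
      exact Filter.Tendsto.congr' (this.mono fun n h => h.symm) tendsto_const_nhds
  have hL2' : Filter.Tendsto (fun n => (-D) * ∑ k ∈ Finset.range n, p k)
      Filter.atTop (nhds ((-D) * ∫ ω, (τ ω : ℝ) ∂P)) := by
    have := hL2.const_mul (-D)
    refine this.congr (fun n => ?_)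
    rw [hsummin n]
  -- Wald inequality
  have hwald : ∫ ω, Sτ ω ∂P ≤ (-D) * ∫ ω, (τ ω : ℝ) ∂P :=
    le_of_tendsto_of_tendsto hL1 hL2' (Filter.Eventually.of_forall hstep)
  -- |Sτ| bound
  have habs : D * ∫ ω, (τ ω : ℝ) ∂P ≤ ∫ ω, |Sτ ω| ∂P := by
    have h1 : ∫ ω, -Sτ ω ∂P ≤ ∫ ω, |Sτ ω| ∂P :=
      integral_mono hSτint.neg hSint (fun ω => neg_le_abs _)
    rw [integral_neg] at h1
    linarith
  -- V bound
  have hVbound : D * (∫ ω, (τ ω : ℝ) ∂P) / μ ≤ ∫ ω, (V ω : ℝ) ∂P := by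
    have h1 : ∫ ω, |Sτ ω| / μ ∂P ≤ ∫ ω, (V ω : ℝ) ∂P := by
      apply integral_mono (hSint.div_const μ) hVint
      intro ω
      show |∑ k ∈ Finset.range (τ ω), X k ω| / μ ≤ (V ω : ℝ)
      rw [hV ω]
      exact Nat.le_ceil _
    have h2 : ∫ ω, |Sτ ω| / μ ∂P = (∫ ω, |Sτ ω| ∂P) / μ := integral_div μ _
    rw [h2] at h1
    calc D * (∫ ω, (τ ω : ℝ) ∂P) / μ ≤ (∫ ω, |Sτ ω| ∂P) / μ := by gcongr
      _ ≤ ∫ ω, (V ω : ℝ) ∂P := h1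
  -- final arithmetic
  set a := ∫ ω, (τ ω : ℝ) ∂P
  set b := ∫ ω, (V ω : ℝ) ∂P
  have hb0 : 0 ≤ b := integral_nonneg (fun ω => by positivity)
  have hab : D * a ≤ μ * b := by
    have := hVbound
    rw [div_le_iff₀ hμ] at this
    nlinarith
  rw [div_le_div_iff₀ (by linarith) (by linarith)]
  nlinarith
end

section
/- Let $X_1, X_2, \dots$ be i.i.d. with $\mathbb{E}[X_1] = D > 0$ and finite variance. Define the CuSum recursion $C_0 = 0$, $C_{n+1} = \max\{0, C_n + X_{n+1}\}$, and the hitting time $\tau_C(A) = \inf\{n \geq 1 : C_n > A\}$. Then $\mathbb{E}[\tau_C(A)] \leq \frac{A}{D}(1 + o(1))$ as $A \to \infty$; more precisely, $\limsup_{A \to \infty} \frac{\mathbb{E}[\tau_C(A)]}{A} \leq \frac{1}{D}$. -/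
open MeasureTheory Filter
open scoped Topology ENNReal


noncomputable def cusumF : ℕ → (ℕ → ℝ) → ℝ
  | 0, _ => 0
  | n+1, x => max 0 (cusumF n x + x (n+1))

lemma cusumF_congr {n : ℕ} {x y : ℕ → ℝ} (h : ∀ i, 1 ≤ i → i ≤ n → x i = y i) :
    cusumF n x = cusumF n y := by
  induction n with
  | zero => rfl
  | succ n ih =>
    simp only [cusumF]
    rw [ih (fun i h1 h2 => h i h1 (h2.trans n.le_succ)), h (n+1) (by omega) le_rfl]

lemma measurable_cusumF (n : ℕ) : Measurable (cusumF n) := by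
  induction n with
  | zero => exact measurable_const
  | succ n ih => exact measurable_const.max (ih.add (measurable_pi_apply _))

lemma sum_min_le_cusumF (M : ℝ) (n : ℕ) (x : ℕ → ℝ) :
    ∑ i ∈ Finset.Icc 1 n, min (x i) M ≤ cusumF n x := by
  induction n with
  | zero => simp [cusumF]
  | succ n ih =>
    rw [Finset.sum_Icc_succ_top (by omega)]
    calc ∑ i ∈ Finset.Icc 1 n, min (x i) M + min (x (n+1)) M
        ≤ cusumF n x + x (n+1) := add_le_add ih (min_le_left _ _)
      _ ≤ cusumF (n+1) x := le_max_right _ _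

lemma wald_bound {Ω : Type*} [MeasurableSpace Ω] (P : Measure Ω) [IsProbabilityMeasure P]
    (X : ℕ → Ω → ℝ) (hmeas : ∀ k, Measurable (X k))
    (hindep : ProbabilityTheory.iIndepFun X P)
    (hident : ∀ k, ProbabilityTheory.IdentDistrib (X k) (X 0) P P)
    (C : ℕ → Ω → ℝ) (hCF : ∀ n ω, C n ω = cusumF n (fun i => X i ω))
    (M : ℝ) (hM : 0 ≤ M) (hYint : Integrable (fun ω => min (X 0 ω) M) P)
    (A : ℝ) (hA : 0 ≤ A) (n : ℕ) (hn : 1 ≤ n) :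
    (∫ ω, min (X 0 ω) M ∂P)
      * ∫ ω, ((sInf ({k | 1 ≤ k ∧ A < C k ω} ∪ {n}) : ℕ) : ℝ) ∂P ≤ A + M := by
  classical
  set Y : ℕ → Ω → ℝ := fun k ω => min (X k ω) M with hY
  set D' : ℝ := ∫ ω, Y 0 ω ∂P with hD'
  set ρ : Ω → ℕ := fun ω => sInf ({k | 1 ≤ k ∧ A < C k ω} ∪ {n}) with hρdef
  have hCmeas : ∀ j, Measurable (C j) := fun j => by
    have : C j = fun ω => cusumF j (fun i => X i ω) := funext (hCF j)
    rw [this]; exact (measurable_cusumF j).comp (measurable_pi_lambda _ hmeas)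
  have hρ_le : ∀ ω, ρ ω ≤ n := fun ω => Nat.sInf_le (Or.inr rfl)
  have hρ_mem : ∀ ω, ρ ω ∈ ({k | 1 ≤ k ∧ A < C k ω} ∪ {n}) :=
    fun ω => Nat.sInf_mem ⟨n, Or.inr rfl⟩
  have hρ_pos : ∀ ω, 1 ≤ ρ ω := by
    intro ω
    rcases hρ_mem ω with h | h
    · exact h.1
    · simp only [Set.mem_singleton_iff] at h; omega
  set G : ℕ → Set Ω := fun k => {ω | ∀ j, 1 ≤ j → j < k → C j ω ≤ A} with hG
  have hGmeas : ∀ k, MeasurableSet (G k) := by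
    intro k
    have : G k = ⋂ (j : ℕ), ⋂ (_ : 1 ≤ j), ⋂ (_ : j < k), {ω | C j ω ≤ A} := by
      ext ω; simp [hG]
    rw [this]
    exact MeasurableSet.iInter fun j => MeasurableSet.iInter fun _ =>
      MeasurableSet.iInter fun _ => measurableSet_le (hCmeas j) measurable_const
  have hHk : ∀ k, 1 ≤ k → k ≤ n → {ω | k ≤ ρ ω} = G k := by
    intro k hk1 hk2
    ext ω
    constructor
    · intro hle j hj1 hjk
      by_contra hlt
      have : ρ ω ≤ j := Nat.sInf_le (Or.inl ⟨hj1, lt_of_not_ge hlt⟩)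
      have : k ≤ ρ ω := hle
      omega
    · intro hω
      refine le_csInf ⟨n, Or.inr rfl⟩ ?_
      rintro m (⟨hm1, hmA⟩ | rfl)
      · by_contra h
        push_neg at h
        exact absurd hmA (not_lt.mpr (hω m hm1 h))
      · exact hk2
  have hup : ∀ k, MeasurableSet {ω | k ≤ ρ ω} := by
    intro k
    rcases Nat.eq_zero_or_pos k with rfl | hk
    · have : {ω : Ω | 0 ≤ ρ ω} = Set.univ := by ext ω; simp
      rw [this]; exact MeasurableSet.univ
    rcases le_or_gt k n with h | h
    · rw [hHk k hk h]; exact hGmeas k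
    · have : {ω : Ω | k ≤ ρ ω} = ∅ := by
        ext ω; simp only [Set.mem_setOf_eq, Set.mem_empty_iff_false, iff_false, not_le]
        exact lt_of_le_of_lt (hρ_le ω) h
      rw [this]; exact MeasurableSet.empty
  have hρmeas : Measurable ρ := by
    apply measurable_to_countable'
    intro m
    have hfib : ρ ⁻¹' {m} = {ω | m ≤ ρ ω} \ {ω | m+1 ≤ ρ ω} := by
      ext ω; simp only [Set.mem_preimage, Set.mem_singleton_iff, Set.mem_diff,
        Set.mem_setOf_eq, not_le]
      omega
    rw [hfib]
    exact (hup m).diff (hup (m+1))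
  have hYmeas : ∀ k, Measurable (Y k) := fun k => (hmeas k).min measurable_const
  have hYid : ∀ k, ProbabilityTheory.IdentDistrib (Y k) (Y 0) P P := fun k =>
    (hident k).comp (measurable_id.min measurable_const)
  have hYkint : ∀ k, Integrable (Y k) P := fun k => (hYid k).integrable_iff.mpr hYint
  have hYval : ∀ k, ∫ ω, Y k ω ∂P = D' := fun k => (hYid k).integral_eq
  -- the key Wald step
  have key : ∀ k, 1 ≤ k → k ≤ n →
      ∫ ω, Set.indicator {ω' | k ≤ ρ ω'} (Y k) ω ∂P = D' * (P {ω' | k ≤ ρ ω'}).toReal := by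
    intro k hk1 hk2
    rw [hHk k hk1 hk2]
    have hdisj : Disjoint ({k} : Finset ℕ) (Finset.Icc 1 (k-1)) := by
      simp only [Finset.disjoint_singleton_left, Finset.mem_Icc]
      omega
    have base := hindep.indepFun_finset {k} (Finset.Icc 1 (k-1)) hdisj hmeas
    set ext : ((i : (Finset.Icc 1 (k-1) : Finset ℕ)) → ℝ) → ℕ → ℝ :=
      fun v i => if h : i ∈ Finset.Icc 1 (k-1) then v ⟨i, h⟩ else 0 with hext
    have hextmeas : Measurable ext := by
      apply measurable_pi_lambda
      intro i
      by_cases h : i ∈ Finset.Icc 1 (k-1)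
      · simpa only [hext, dif_pos h] using measurable_pi_apply _
      · simpa only [hext, dif_neg h] using measurable_const
    set Sg : Set ((i : (Finset.Icc 1 (k-1) : Finset ℕ)) → ℝ) :=
      {v | ∀ j, 1 ≤ j → j < k → cusumF j (ext v) ≤ A} with hSg
    have hSgmeas : MeasurableSet Sg := by
      have : Sg = ⋂ (j : ℕ), ⋂ (_ : 1 ≤ j), ⋂ (_ : j < k), {v | cusumF j (ext v) ≤ A} := by
        ext v; simp [hSg]
      rw [this]
      exact MeasurableSet.iInter fun j => MeasurableSet.iInter fun _ =>
        MeasurableSet.iInter fun _ =>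
          measurableSet_le ((measurable_cusumF j).comp hextmeas) measurable_const
    set φ : ((i : ({k} : Finset ℕ)) → ℝ) → ℝ :=
      fun v => min (v ⟨k, Finset.mem_singleton_self k⟩) M with hφdef
    have hφ : Measurable φ := (measurable_pi_apply _).min measurable_const
    set ψ : ((i : (Finset.Icc 1 (k-1) : Finset ℕ)) → ℝ) → ℝ :=
      Sg.indicator (fun _ => (1:ℝ)) with hψdef
    have hψ : Measurable ψ := measurable_const.indicator hSgmeas
    have hcomp := base.comp hφ hψ
    have e1 : φ ∘ (fun ω (i : ({k} : Finset ℕ)) => X i ω) = Y k := rfl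
    have e2 : ψ ∘ (fun ω (i : (Finset.Icc 1 (k-1) : Finset ℕ)) => X i ω)
        = (G k).indicator (fun _ => (1:ℝ)) := by
      funext ω
      have hcus : ∀ j, 1 ≤ j → j < k →
          cusumF j (ext (fun i : (Finset.Icc 1 (k-1) : Finset ℕ) => X i ω))
            = C j ω := by
        intro j hj1 hjk
        rw [hCF j]
        apply cusumF_congr
        intro i hi1 hij
        have hmem : i ∈ Finset.Icc 1 (k-1) := Finset.mem_Icc.mpr ⟨hi1, by omega⟩
        simp only [hext, dif_pos hmem]
      have hmemiff : ((fun i : (Finset.Icc 1 (k-1) : Finset ℕ) => X i ω) ∈ Sg) ↔ ω ∈ G k := by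
        constructor
        · intro h j hj1 hjk
          have := h j hj1 hjk
          rwa [hcus j hj1 hjk] at this
        · intro h j hj1 hjk
          rw [hcus j hj1 hjk]
          exact h j hj1 hjk
      by_cases hmem : ω ∈ G k
      · simp [hψdef, Function.comp, Set.indicator_of_mem (hmemiff.mpr hmem),
          Set.indicator_of_mem hmem]
      · simp [hψdef, Function.comp, Set.indicator_of_notMem (fun hc => hmem (hmemiff.mp hc)),
          Set.indicator_of_notMem hmem]
    rw [e1, e2] at hcomp
    have hmul := hcomp.integral_mul_eq_mul_integral (hYkint k).aestronglyMeasurable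
      ((integrable_const (1:ℝ)).indicator (hGmeas k)).aestronglyMeasurable
    have e3 : (Y k * (G k).indicator (fun _ => (1:ℝ))) = (G k).indicator (Y k) := by
      funext ω
      by_cases hmem : ω ∈ G k
      · simp [Set.indicator_of_mem hmem]
      · simp [Set.indicator_of_notMem hmem]
    rw [e3] at hmul
    rw [hmul, hYval k, integral_indicator_const (1:ℝ) (hGmeas k), smul_eq_mul, mul_one]; rfl
  -- E[ρ] as a sum of probabilities
  have hρ_int_eq : ∫ ω, (ρ ω : ℝ) ∂P
      = ∑ k ∈ Finset.Icc 1 n, (P {ω' | k ≤ ρ ω'}).toReal := by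
    have hpt : ∀ ω, (ρ ω : ℝ)
        = ∑ k ∈ Finset.Icc 1 n, Set.indicator {ω' | k ≤ ρ ω'} (fun _ => (1:ℝ)) ω := by
      intro ω
      have h1 : ∀ k, Set.indicator {ω' | k ≤ ρ ω'} (fun _ => (1:ℝ)) ω
          = if k ≤ ρ ω then (1:ℝ) else 0 := fun k => by
        rw [Set.indicator_apply]; rfl
      simp only [h1]
      rw [Finset.sum_boole]
      have hfil : (Finset.Icc 1 n).filter (fun k => k ≤ ρ ω) = Finset.Icc 1 (ρ ω) := by
        ext k
        simp only [Finset.mem_filter, Finset.mem_Icc]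
        have := hρ_le ω
        omega
      rw [hfil, Nat.card_Icc]
      simp
    rw [integral_congr_ae (Filter.Eventually.of_forall hpt),
      integral_finset_sum _ (fun k _ => (integrable_const (1:ℝ)).indicator (hup k))]
    refine Finset.sum_congr rfl fun k _ => ?_
    rw [integral_indicator_const (1:ℝ) (hup k), smul_eq_mul, mul_one]; rfl
  have hmain : D' * ∫ ω, (ρ ω : ℝ) ∂P
      = ∫ ω, ∑ k ∈ Finset.Icc 1 n, Set.indicator {ω' | k ≤ ρ ω'} (Y k) ω ∂P := by
    rw [hρ_int_eq, Finset.mul_sum,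
      integral_finset_sum _ (fun k _ => (hYkint k).indicator (hup k))]
    refine Finset.sum_congr rfl fun k hk => ?_
    rw [key k (Finset.mem_Icc.mp hk).1 (Finset.mem_Icc.mp hk).2]
  have hTbound : ∀ ω, ∑ k ∈ Finset.Icc 1 n, Set.indicator {ω' | k ≤ ρ ω'} (Y k) ω ≤ A + M := by
    intro ω
    have h1 : ∑ k ∈ Finset.Icc 1 n, Set.indicator {ω' | k ≤ ρ ω'} (Y k) ω
        = ∑ k ∈ Finset.Icc 1 (ρ ω), Y k ω := by
      have h2 : ∀ k, Set.indicator {ω' | k ≤ ρ ω'} (Y k) ω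
          = if k ≤ ρ ω then Y k ω else 0 := fun k => by
        rw [Set.indicator_apply]; rfl
      simp only [h2]
      rw [← Finset.sum_filter]
      have hfil : (Finset.Icc 1 n).filter (fun k => k ≤ ρ ω) = Finset.Icc 1 (ρ ω) := by
        ext k
        simp only [Finset.mem_filter, Finset.mem_Icc]
        have := hρ_le ω
        omega
      rw [hfil]
    rw [h1]
    obtain ⟨r, hr⟩ : ∃ r, ρ ω = r + 1 := ⟨ρ ω - 1, by have := hρ_pos ω; omega⟩
    rw [hr, Finset.sum_Icc_succ_top (by omega)]
    have hC_le : C r ω ≤ A := by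
      rcases Nat.eq_zero_or_pos r with rfl | hrpos
      · rw [hCF 0]; simpa [cusumF] using hA
      · by_contra h
        have h2 : ρ ω ≤ r := Nat.sInf_le (Or.inl ⟨hrpos, lt_of_not_ge h⟩)
        omega
    calc ∑ k ∈ Finset.Icc 1 r, Y k ω + Y (r+1) ω
        ≤ cusumF r (fun i => X i ω) + M :=
          add_le_add (sum_min_le_cusumF M r _) (min_le_right _ _)
      _ = C r ω + M := by rw [hCF]
      _ ≤ A + M := by linarith
  have hTint : Integrable
      (fun ω => ∑ k ∈ Finset.Icc 1 n, Set.indicator {ω' | k ≤ ρ ω'} (Y k) ω) P :=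
    integrable_finset_sum _ (fun k _ => (hYkint k).indicator (hup k))
  calc D' * ∫ ω, (ρ ω : ℝ) ∂P
      = ∫ ω, ∑ k ∈ Finset.Icc 1 n, Set.indicator {ω' | k ≤ ρ ω'} (Y k) ω ∂P := hmain
    _ ≤ ∫ _ω, (A + M) ∂P :=
        integral_mono hTint (integrable_const _) hTbound
    _ = A + M := by simp

lemma measurable_natSInf {Ω : Type*} [MeasurableSpace Ω] (T : Ω → Set ℕ)
    (h : ∀ k, MeasurableSet {ω | k ∈ T ω}) : Measurable (fun ω => sInf (T ω)) := by
  apply measurable_to_countable'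
  intro m
  match m with
  | 0 =>
    have : (fun ω => sInf (T ω)) ⁻¹' {0} = {ω | 0 ∈ T ω} ∪ ⋂ j, {ω | j ∈ T ω}ᶜ := by
      ext ω
      simp only [Set.mem_preimage, Set.mem_singleton_iff, Set.mem_union, Set.mem_iInter,
        Set.mem_compl_iff, Set.mem_setOf_eq]
      rw [Nat.sInf_eq_zero]
      constructor
      · rintro (h0 | hemp)
        · exact Or.inl h0
        · exact Or.inr (fun j hj => by rw [hemp] at hj; exact hj)
      · rintro (h0 | hall)
        · exact Or.inl h0
        · exact Or.inr (Set.eq_empty_iff_forall_notMem.mpr hall)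
    rw [this]
    exact (h 0).union (MeasurableSet.iInter fun j => (h j).compl)
  | (m+1) =>
    have : (fun ω => sInf (T ω)) ⁻¹' {m+1}
        = {ω | (m+1) ∈ T ω} ∩ ⋂ j ∈ Finset.range (m+1), {ω | j ∈ T ω}ᶜ := by
      ext ω
      simp only [Set.mem_preimage, Set.mem_singleton_iff, Set.mem_inter_iff, Set.mem_iInter,
        Set.mem_compl_iff, Set.mem_setOf_eq, Finset.mem_range]
      constructor
      · intro heq
        have hne : (T ω).Nonempty := by
          by_contra hc
          rw [Set.not_nonempty_iff_eq_empty] at hc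
          rw [hc, Nat.sInf_empty] at heq
          omega
        have hmem := Nat.sInf_mem hne
        rw [heq] at hmem
        refine ⟨hmem, fun j hj hjmem => ?_⟩
        have := Nat.sInf_le hjmem
        omega
      · rintro ⟨hmem, hmin⟩
        have h1 := Nat.sInf_le hmem
        have h2 := Nat.sInf_mem (⟨m+1, hmem⟩ : (T ω).Nonempty)
        by_contra hne
        have hlt : sInf (T ω) < m + 1 := by omega
        exact hmin _ hlt h2
    rw [this]
    exact (h (m+1)).inter
      (MeasurableSet.biInter (Set.to_countable _) fun j _ => (h j).compl)

/-- First-order delay asymptotics for the CuSum stopping time: for i.i.d. increments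
with mean `D > 0` and finite variance, the CuSum recursion `C₀ = 0`,
`C_{n+1} = max {0, C_n + X_{n+1}}` and hitting time `τ_C(A) = inf{n ≥ 1 : C_n > A}`
satisfy `limsup_{A → ∞} 𝔼[τ_C(A)] / A ≤ 1 / D`. -/
theorem stmt_15 {Ω : Type*} [MeasurableSpace Ω] (P : Measure Ω) [IsProbabilityMeasure P]
    (X : ℕ → Ω → ℝ) (hmeas : ∀ k, Measurable (X k))
    (hindep : ProbabilityTheory.iIndepFun X P)
    (hident : ∀ k, ProbabilityTheory.IdentDistrib (X k) (X 0) P P)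
    (D : ℝ) (hD : 0 < D) (hmean : ∫ ω, X 0 ω ∂P = D)
    (hL2 : Integrable (fun ω => (X 0 ω) ^ 2) P)
    (C : ℕ → Ω → ℝ) (hC0 : ∀ ω, C 0 ω = 0)
    (hC : ∀ n ω, C (n + 1) ω = max 0 (C n ω + X (n + 1) ω))
    (τ : ℝ → Ω → ℕ)
    (hτ : ∀ A ω, τ A ω = sInf {n | 1 ≤ n ∧ A < C n ω}) :
    limsup (fun A : ℝ => (∫ ω, (τ A ω : ℝ) ∂P) / A) atTop ≤ 1 / D := by
  classical
  have hCF : ∀ n ω, C n ω = cusumF n (fun i => X i ω) := by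
    intro n
    induction n with
    | zero => intro ω; rw [hC0]; rfl
    | succ n ih => intro ω; rw [hC n ω, ih ω]; rfl
  have hCmeas : ∀ j, Measurable (C j) := fun j => by
    have : C j = fun ω => cusumF j (fun i => X i ω) := funext (hCF j)
    rw [this]; exact (measurable_cusumF j).comp (measurable_pi_lambda _ hmeas)
  have hX0int : Integrable (X 0) P := by
    refine Integrable.mono' ((integrable_const (1:ℝ)).add hL2)
      (hmeas 0).aestronglyMeasurable ?_
    refine Filter.Eventually.of_forall fun ω => ?_
    simp only [Pi.add_apply]
    rw [Real.norm_eq_abs]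
    nlinarith [sq_abs (X 0 ω), abs_nonneg (X 0 ω), sq_nonneg (|X 0 ω| - 1)]
  have hYint : ∀ M : ℝ, Integrable (fun ω => min (X 0 ω) M) P := fun M => by
    refine Integrable.mono' (hX0int.abs.add (integrable_const |M|))
      ((hmeas 0).min measurable_const).aestronglyMeasurable ?_
    refine Filter.Eventually.of_forall fun ω => ?_
    simp only [Pi.add_apply]
    rw [Real.norm_eq_abs]
    calc |min (X 0 ω) M| ≤ max |X 0 ω| |M| := abs_min_le_max_abs_abs
      _ ≤ |X 0 ω| + |M| :=
        max_le (le_add_of_nonneg_right (abs_nonneg M)) (le_add_of_nonneg_left (abs_nonneg _))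
  have hτmeas : ∀ A : ℝ, Measurable (τ A) := fun A => by
    have he : τ A = fun ω => sInf {n | 1 ≤ n ∧ A < C n ω} := funext (hτ A)
    rw [he]
    apply measurable_natSInf
    intro k
    by_cases hk : 1 ≤ k
    · have e : {ω : Ω | k ∈ {n | 1 ≤ n ∧ A < C n ω}} = {ω | A < C k ω} := by
        ext ω; simp [Set.mem_setOf_eq, hk]
      rw [e]; exact measurableSet_lt measurable_const (hCmeas k)
    · have e : {ω : Ω | k ∈ {n | 1 ≤ n ∧ A < C n ω}} = ∅ := by
        ext ω; simp [Set.mem_setOf_eq, hk]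
      rw [e]; exact MeasurableSet.empty
  -- main bound for a fixed truncation level M
  have hbound : ∀ (M : ℝ), 0 ≤ M → 0 < ∫ ω, min (X 0 ω) M ∂P →
      ∀ A : ℝ, 0 ≤ A →
        ∫ ω, (τ A ω : ℝ) ∂P ≤ (A + M) / ∫ ω, min (X 0 ω) M ∂P := by
    intro M hM hDpos A hA
    set D' : ℝ := ∫ ω, min (X 0 ω) M ∂P with hD'def
    set B : ℝ := (A + M) / D' with hBdef
    have hB0 : 0 ≤ B := div_nonneg (by linarith) hDpos.le
    have hmin_int : ∀ n : ℕ, Integrable (fun ω => ((min (τ A ω) n : ℕ):ℝ)) P := fun n => by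
      refine Integrable.mono' (integrable_const (n:ℝ))
        ((measurable_from_nat.comp ((hτmeas A).min measurable_const)).aestronglyMeasurable) ?_
      refine Eventually.of_forall fun ω => ?_
      rw [Real.norm_eq_abs, abs_of_nonneg (Nat.cast_nonneg _)]
      exact_mod_cast min_le_right _ _
    have hstep : ∀ n : ℕ, ∫ ω, ((min (τ A ω) (n+1) : ℕ) : ℝ) ∂P ≤ B := by
      intro n
      set ρ : Ω → ℕ := fun ω => sInf ({k | 1 ≤ k ∧ A < C k ω} ∪ {n+1}) with hρdef
      have hρmeas : Measurable ρ := by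
        apply measurable_natSInf
        intro k
        by_cases hk : k = n+1
        · have e : {ω : Ω | k ∈ {m | 1 ≤ m ∧ A < C m ω} ∪ {n+1}} = Set.univ := by
            ext ω
            simp [Set.mem_union, Set.mem_singleton_iff, Set.mem_setOf_eq, hk]
          rw [e]; exact MeasurableSet.univ
        by_cases hk1 : 1 ≤ k
        · have e : {ω : Ω | k ∈ {m | 1 ≤ m ∧ A < C m ω} ∪ {n+1}} = {ω | A < C k ω} := by
            ext ω
            simp [Set.mem_union, Set.mem_singleton_iff, Set.mem_setOf_eq, hk, hk1]
          rw [e]; exact measurableSet_lt measurable_const (hCmeas k)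
        · have e : {ω : Ω | k ∈ {m | 1 ≤ m ∧ A < C m ω} ∪ {n+1}} = ∅ := by
            ext ω
            simp [Set.mem_union, Set.mem_singleton_iff, Set.mem_setOf_eq, hk, hk1]
          rw [e]; exact MeasurableSet.empty
      have hρle : ∀ ω, min (τ A ω) (n+1) ≤ ρ ω := by
        intro ω
        rcases Nat.sInf_mem
            (⟨n+1, Or.inr rfl⟩ : ({k | 1 ≤ k ∧ A < C k ω} ∪ {n+1}).Nonempty) with hmem | hmem
        · have hle : τ A ω ≤ ρ ω := by rw [hτ A ω]; exact Nat.sInf_le hmem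
          exact le_trans (min_le_left _ _) hle
        · have he : ρ ω = n+1 := hmem
          rw [he]; exact min_le_right _ _
      have hρub : ∀ ω, ρ ω ≤ n+1 := fun ω => Nat.sInf_le (Or.inr rfl)
      have hρint : Integrable (fun ω => (ρ ω : ℝ)) P := by
        refine Integrable.mono' (integrable_const ((n:ℝ)+1))
          ((measurable_from_nat.comp hρmeas).aestronglyMeasurable) ?_
        refine Eventually.of_forall fun ω => ?_
        rw [Real.norm_eq_abs, abs_of_nonneg (Nat.cast_nonneg _)]
        exact_mod_cast hρub ω
      have hwald : D' * ∫ ω, (ρ ω : ℝ) ∂P ≤ A + M :=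
        wald_bound P X hmeas hindep hident C hCF M hM (hYint M) A hA (n+1) (by omega)
      have hρB : ∫ ω, (ρ ω : ℝ) ∂P ≤ B := by
        rw [hBdef, le_div_iff₀ hDpos]
        nlinarith [hwald]
      calc ∫ ω, ((min (τ A ω) (n+1) : ℕ) : ℝ) ∂P
          ≤ ∫ ω, (ρ ω : ℝ) ∂P :=
            integral_mono (hmin_int (n+1)) hρint (fun ω => Nat.cast_le.mpr (hρle ω))
        _ ≤ B := hρB
    have hlin : ∫⁻ ω, (τ A ω : ℝ≥0∞) ∂P ≤ ENNReal.ofReal B := by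
      have hmono : Monotone (fun (n:ℕ) (ω:Ω) => ((min (τ A ω) n : ℕ) : ℝ≥0∞)) :=
        fun a b hab ω => Nat.cast_le.mpr (min_le_min le_rfl hab)
      have hmeas' : ∀ n:ℕ, Measurable (fun ω => ((min (τ A ω) n : ℕ) : ℝ≥0∞)) := fun n =>
        measurable_from_nat.comp ((hτmeas A).min measurable_const)
      have hptsup : ∀ ω, (⨆ n:ℕ, ((min (τ A ω) n : ℕ):ℝ≥0∞)) = (τ A ω : ℝ≥0∞) := by
        intro ω
        apply le_antisymm
        · exact iSup_le fun n => Nat.cast_le.mpr (min_le_left _ _)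
        · exact le_iSup_of_le (τ A ω) (by simp)
      have he : (fun ω => (τ A ω : ℝ≥0∞)) = fun ω => ⨆ n:ℕ, ((min (τ A ω) n:ℕ):ℝ≥0∞) :=
        funext fun ω => (hptsup ω).symm
      rw [he, lintegral_iSup hmeas' hmono]
      refine iSup_le fun n => ?_
      have h1 : ∫⁻ ω, ((min (τ A ω) n : ℕ):ℝ≥0∞) ∂P
          ≤ ∫⁻ ω, ((min (τ A ω) (n+1) : ℕ):ℝ≥0∞) ∂P :=
        lintegral_mono fun ω => Nat.cast_le.mpr (min_le_min le_rfl (Nat.le_succ n))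
      refine h1.trans ?_
      calc ∫⁻ ω, ((min (τ A ω) (n+1) : ℕ):ℝ≥0∞) ∂P
          = ∫⁻ ω, ENNReal.ofReal ((min (τ A ω) (n+1):ℕ):ℝ) ∂P := by
            refine lintegral_congr fun ω => ?_
            rw [ENNReal.ofReal_natCast]
        _ = ENNReal.ofReal (∫ ω, ((min (τ A ω) (n+1):ℕ):ℝ) ∂P) :=
            (ofReal_integral_eq_lintegral_ofReal (hmin_int (n+1))
              (Eventually.of_forall fun ω => Nat.cast_nonneg _)).symm
        _ ≤ ENNReal.ofReal B := ENNReal.ofReal_le_ofReal (hstep n)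
    by_cases hint : Integrable (fun ω => (τ A ω : ℝ)) P
    · have h1 : ENNReal.ofReal (∫ ω, (τ A ω:ℝ) ∂P) = ∫⁻ ω, ENNReal.ofReal ((τ A ω:ℝ)) ∂P :=
        ofReal_integral_eq_lintegral_ofReal hint
          (Eventually.of_forall fun ω => Nat.cast_nonneg _)
      have h2 : ∫⁻ ω, ENNReal.ofReal ((τ A ω:ℝ)) ∂P = ∫⁻ ω, (τ A ω : ℝ≥0∞) ∂P :=
        lintegral_congr fun ω => ENNReal.ofReal_natCast _
      have h3 : ENNReal.ofReal (∫ ω, (τ A ω:ℝ) ∂P) ≤ ENNReal.ofReal B := by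
        rw [h1, h2]; exact hlin
      exact (ENNReal.ofReal_le_ofReal_iff hB0).mp h3
    · rw [integral_undef hint]; exact hB0
  -- truncated means tend to D
  have htend : Tendsto (fun m : ℕ => ∫ ω, min (X 0 ω) (m:ℝ) ∂P) atTop (𝓝 D) := by
    rw [← hmean]
    apply integral_tendsto_of_tendsto_of_monotone (fun m => hYint m) hX0int
    · exact Eventually.of_forall fun ω a b hab => min_le_min le_rfl (Nat.cast_le.mpr hab)
    · refine Eventually.of_forall fun ω => ?_
      apply tendsto_atTop_of_eventually_const (i₀ := ⌈X 0 ω⌉₊)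
      intro m hm
      exact min_eq_left ((Nat.le_ceil _).trans (Nat.cast_le.mpr hm))
  -- conclude via density
  refine le_of_forall_gt_imp_ge_of_dense fun b hb => ?_
  have hb0 : 0 < b := lt_trans (by positivity) hb
  have hDb : 1/b < D := by
    rw [div_lt_iff₀ hb0]
    rw [div_lt_iff₀ hD] at hb
    linarith
  obtain ⟨N, hN⟩ := (htend.eventually (eventually_gt_nhds hDb)).exists
  set D' : ℝ := ∫ ω, min (X 0 ω) (N:ℝ) ∂P with hD'def
  have hD'pos : 0 < D' := lt_trans (by positivity) hN
  have hbD' : 1 < b * D' := by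
    rw [div_lt_iff₀ hb0] at hN
    linarith
  have hkey := hbound (N:ℝ) (Nat.cast_nonneg N) hD'pos
  refine limsup_le_of_le ?_ ?_
  · refine isCoboundedUnder_le_of_eventually_le (x := (0:ℝ)) atTop ?_
    filter_upwards [eventually_ge_atTop (1:ℝ)] with A hA
    exact div_nonneg (integral_nonneg fun ω => Nat.cast_nonneg _) (by linarith)
  · filter_upwards [eventually_ge_atTop (max 1 ((N:ℝ) / (b * D' - 1)))] with A hA
    have hA1 : (1:ℝ) ≤ A := le_trans (le_max_left _ _) hA
    have hA0 : (0:ℝ) < A := by linarith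
    have hN' : (N:ℝ)/(b*D'-1) ≤ A := le_trans (le_max_right _ _) hA
    have hNle : (N:ℝ) ≤ A * (b*D'-1) := by
      rw [div_le_iff₀ (by linarith)] at hN'
      linarith
    have h1 := hkey A (by linarith)
    rw [div_le_iff₀ hA0]
    refine h1.trans ?_
    rw [div_le_iff₀ hD'pos]
    nlinarith
end
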